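/- Let p, q be integers with 2 ≤ p < q and gcd(p, q) = 1, and let G = ⟨x, y ∣ x^p = y^q⟩ be the group with this presentation (the (p,q)-torus knot group). Then, with commutator convention [a,b] = a⁻¹b⁻¹ab, the element [x, y] is a generalized torsion element of G; in particular [x, y] ≠ 1. -/

import Mathlib

/-- `g` is a generalized torsion element of `G`: `g ≠ 1` and some non-empty
finite product of conjugates of `g` equals `1`. -/
def IsGeneralizedTorsion {G : Type*} [Group G] (g : G) : Prop :=
  g ≠ 1 ∧ ∃ xs : List G, xs ≠ [] ∧ (xs.map (fun x => x * g * x⁻¹)).prod = 1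

/-- The commutator, with the convention `[a,b] = a⁻¹b⁻¹ab`. -/
def com {G : Type*} [Group G] (a b : G) : G := a⁻¹ * b⁻¹ * a * b

/-- The single relator `x^p y^{-q}` of the `(p,q)`-torus knot group
`⟨x, y ∣ x^p = y^q⟩`; generator `0` is `x` and generator `1` is `y`. -/
def torusRels (p q : ℤ) : Set (FreeGroup (Fin 2)) :=
  {FreeGroup.of 0 ^ p * (FreeGroup.of 1 ^ q)⁻¹}

/-- Permutation of `ZMod P × ZMod Q` shifting the first coordinate; has order dividing `P`. -/
def paAux (P Q : ℕ) : Equiv.Perm (ZMod P × ZMod Q) where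
  toFun z := (z.1 + 1, z.2)
  invFun z := (z.1 - 1, z.2)
  left_inv z := by simp
  right_inv z := by simp

/-- Permutation of `ZMod P × ZMod Q` shifting the second coordinate over `0`;
has order dividing `Q`, and does not commute with `paAux` when `P, Q ≥ 2`. -/
def pbAux (P Q : ℕ) : Equiv.Perm (ZMod P × ZMod Q) where
  toFun z := (z.1, z.2 + if z.1 = 0 then 1 else 0)
  invFun z := (z.1, z.2 - if z.1 = 0 then 1 else 0)
  left_inv z := by simp
  right_inv z := by simp

lemma paAux_pow (P Q : ℕ) (n : ℕ) (z : ZMod P × ZMod Q) :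
    ((paAux P Q) ^ n) z = (z.1 + n, z.2) := by
  induction n with
  | zero => simp
  | succ n ih =>
    rw [pow_succ', Equiv.Perm.mul_apply, ih]
    simp only [paAux, Equiv.coe_fn_mk]
    push_cast
    ring_nf

lemma pbAux_pow (P Q : ℕ) (n : ℕ) (z : ZMod P × ZMod Q) :
    ((pbAux P Q) ^ n) z = (z.1, z.2 + n * (if z.1 = 0 then 1 else 0)) := by
  induction n with
  | zero => simp
  | succ n ih =>
    rw [pow_succ', Equiv.Perm.mul_apply, ih]
    simp only [pbAux, Equiv.coe_fn_mk]
    push_cast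
    ring_nf

lemma paAux_orv (P Q : ℕ) : (paAux P Q) ^ P = 1 := by
  ext z
  · simp [paAux_pow, ZMod.natCast_self]
  · simp [paAux_pow]

lemma pbAux_orv (P Q : ℕ) : (pbAux P Q) ^ Q = 1 := by
  ext z
  · simp [pbAux_pow]
  · simp [pbAux_pow, ZMod.natCast_self]

lemma telescope_com {G : Type*} [Group G] (a b : G) (n : ℕ) :
    ((((List.range n).reverse).map (fun i => (a ^ i)⁻¹)).map
      (fun x => x * com a b * x⁻¹)).prod = (a ^ n)⁻¹ * b⁻¹ * a ^ n * b := by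
  induction n with
  | zero => simp [com]
  | succ n ih =>
    rw [List.range_succ, List.reverse_append, List.reverse_singleton, List.singleton_append,
      List.map_cons, List.map_cons, List.prod_cons, ih]
    simp only [com, pow_succ]
    group

/-- In the `(p,q)`-torus knot group `⟨x, y ∣ x^p = y^q⟩` with
`2 ≤ p < q` and `gcd(p,q) = 1`, the commutator `[x,y]` is a generalized
torsion element; in particular `[x,y] ≠ 1`. -/
theorem torusKnotGroup_commutator_isGeneralizedTorsion
    (p q : ℤ) (hp : 2 ≤ p) (hpq : p < q) (hgcd : Int.gcd p q = 1) :
    IsGeneralizedTorsion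
      (com (PresentedGroup.of 0 : PresentedGroup (torusRels p q))
        (PresentedGroup.of 1)) := by
  obtain ⟨P, rfl⟩ : ∃ n : ℕ, (n : ℤ) = p := ⟨p.toNat, Int.toNat_of_nonneg (by omega)⟩
  obtain ⟨Q, rfl⟩ : ∃ n : ℕ, (n : ℤ) = q := ⟨q.toNat, Int.toNat_of_nonneg (by omega)⟩
  have hP2 : 2 ≤ P := by exact_mod_cast hp
  have hQ2 : 2 ≤ Q := by
    have h : (2 : ℤ) ≤ (Q : ℤ) := hp.trans hpq.le
    exact_mod_cast h
  set X : PresentedGroup (torusRels P Q) := PresentedGroup.of 0 with hX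
  set Y : PresentedGroup (torusRels P Q) := PresentedGroup.of 1 with hY
  -- the relation in the presented group
  have hrel : X ^ (P : ℤ) * (Y ^ (Q : ℤ))⁻¹ = 1 := by
    have hmem : (FreeGroup.of 0 ^ (P : ℤ) * (FreeGroup.of 1 ^ (Q : ℤ))⁻¹ : FreeGroup (Fin 2)) ∈
        Subgroup.normalClosure (torusRels P Q) :=
      Subgroup.subset_normalClosure rfl
    have : PresentedGroup.mk (torusRels P Q)
        (FreeGroup.of 0 ^ (P : ℤ) * (FreeGroup.of 1 ^ (Q : ℤ))⁻¹) = 1 :=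
      (QuotientGroup.eq_one_iff _).mpr hmem
    rw [map_mul, map_inv, map_zpow, map_zpow] at this; exact this
  have hXY : X ^ P = Y ^ Q := by
    have := mul_inv_eq_one.mp hrel
    rwa [zpow_natCast, zpow_natCast] at this
  constructor
  · -- nontriviality via a homomorphism to permutations
    intro hcom
    haveI : Fact (1 < P) := ⟨by omega⟩
    haveI : Fact (1 < Q) := ⟨by omega⟩
    set f : Fin 2 → Equiv.Perm (ZMod P × ZMod Q) := ![paAux P Q, pbAux P Q] with hf
    have hlift : ∀ r ∈ torusRels (P : ℤ) (Q : ℤ), FreeGroup.lift f r = 1 := by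
      intro r hr
      have hr' : r = FreeGroup.of 0 ^ (P : ℤ) * (FreeGroup.of 1 ^ (Q : ℤ))⁻¹ := hr
      subst hr'
      have h1 : (paAux P Q : Equiv.Perm (ZMod P × ZMod Q)) ^ (P : ℤ) = 1 := by
        rw [zpow_natCast, paAux_orv]
      have h2 : (pbAux P Q : Equiv.Perm (ZMod P × ZMod Q)) ^ (Q : ℤ) = 1 := by
        rw [zpow_natCast, pbAux_orv]
      simp [map_mul, map_inv, map_zpow, hf, h1, h2, paAux_orv, pbAux_orv]
    set φ := PresentedGroup.toGroup hlift with hφ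
    have hφX : φ X = paAux P Q := by
      rw [hX, hφ, PresentedGroup.toGroup.of]; simp [hf]
    have hφY : φ Y = pbAux P Q := by
      rw [hY, hφ, PresentedGroup.toGroup.of]; simp [hf]
    have himg : (paAux P Q)⁻¹ * (pbAux P Q)⁻¹ * paAux P Q * pbAux P Q = 1 := by
      have := congrArg φ hcom
      simpa [com, map_mul, map_inv, hφX, hφY] using this
    have hcomm : paAux P Q * pbAux P Q = pbAux P Q * paAux P Q := by
      have h := mul_eq_one_iff_eq_inv.mp himg
      have h2 : (pbAux P Q)⁻¹ * paAux P Q = paAux P Q * (pbAux P Q)⁻¹ := by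
        calc (pbAux P Q)⁻¹ * paAux P Q
            = paAux P Q * ((paAux P Q)⁻¹ * (pbAux P Q)⁻¹ * paAux P Q) := by group
          _ = paAux P Q * (pbAux P Q)⁻¹ := by rw [h]
      calc paAux P Q * pbAux P Q
          = pbAux P Q * ((pbAux P Q)⁻¹ * paAux P Q) * pbAux P Q := by group
        _ = pbAux P Q * (paAux P Q * (pbAux P Q)⁻¹) * pbAux P Q := by rw [h2]
        _ = pbAux P Q * paAux P Q := by group
    have heval := congrArg (fun σ : Equiv.Perm (ZMod P × ZMod Q) => (σ (0, 0)).2) hcomm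
    have h10 : (0 : ZMod P) + 1 ≠ 0 := by
      rw [zero_add]; exact one_ne_zero
    simp only [Equiv.Perm.mul_apply, paAux, pbAux, Equiv.coe_fn_mk, if_pos rfl,
      if_neg h10] at heval
    simp only [zero_add, add_zero] at heval
    exact one_ne_zero heval
  · -- the vanishing product of conjugates
    refine ⟨((List.range P).reverse).map (fun i => (X ^ i)⁻¹), ?_, ?_⟩
    · simp only [ne_eq, List.map_eq_nil_iff, List.reverse_eq_nil_iff, List.range_eq_nil]
      omega
    · rw [telescope_com]
      have hcY : X ^ P * Y = Y * X ^ P := by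
        rw [hXY, ← pow_succ, ← pow_succ']
      rw [mul_assoc, mul_assoc, hcY, ← mul_assoc Y⁻¹, inv_mul_cancel, one_mul,
        inv_mul_cancel]
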